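/- For all x > 0, 3/(1+3x) < arctan(1/√x)/√x < 1/x, i.e. the function φ₂(x) = arctan(1/√x)/√x lies strictly between 3/(1+3x) and 1/x. -/

import Mathlib

open Real

lemma arctan_lt_self_aux {t : ℝ} (ht : 0 < t) : Real.arctan t < t := by
  have h : StrictMonoOn (fun t : ℝ => t - Real.arctan t) (Set.Ici 0) := by
    apply strictMonoOn_of_deriv_pos (convex_Ici 0)
    · exact (continuous_id.sub Real.continuous_arctan).continuousOn
    · intro y hy
      rw [interior_Ici] at hy
      have hd : HasDerivAt (fun t : ℝ => t - Real.arctan t) (1 - 1 / (1 + y ^ 2)) y :=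
        (hasDerivAt_id y).sub (Real.hasDerivAt_arctan y)
      rw [hd.deriv]
      have h1 : (0:ℝ) < 1 + y ^ 2 := by positivity
      have hy' : 0 < y := hy
      rw [sub_pos, div_lt_one h1]
      nlinarith [mul_pos hy' hy']
  have := h (Set.self_mem_Ici) (Set.mem_Ici.mpr ht.le) ht
  simpa [Real.arctan_zero] using this

lemma arctan_gt_aux {t : ℝ} (ht : 0 < t) : 3 * t / (3 + t ^ 2) < Real.arctan t := by
  have h : StrictMonoOn (fun t : ℝ => Real.arctan t - 3 * t / (3 + t ^ 2)) (Set.Ici 0) := by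
    apply strictMonoOn_of_deriv_pos (convex_Ici 0)
    · apply Real.continuous_arctan.continuousOn.sub
      apply ContinuousOn.div (by fun_prop) (by fun_prop)
      intro y _; positivity
    · intro y hy
      rw [interior_Ici] at hy
      have h2 : (0:ℝ) < 3 + y ^ 2 := by positivity
      have hd2 : HasDerivAt (fun t : ℝ => 3 * t / (3 + t ^ 2))
          ((3 * (3 + y ^ 2) - 3 * y * (2 * y)) / (3 + y ^ 2) ^ 2) y := by
        have ha : HasDerivAt (fun t : ℝ => 3 * t) 3 y := by
          simpa using (hasDerivAt_id y).const_mul 3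
        have hb : HasDerivAt (fun t : ℝ => 3 + t ^ 2) (2 * y) y := by
          simpa using ((hasDerivAt_pow 2 y).const_add 3)
        exact ha.div hb h2.ne'
      have hd : HasDerivAt (fun t : ℝ => Real.arctan t - 3 * t / (3 + t ^ 2))
          (1 / (1 + y ^ 2) - (3 * (3 + y ^ 2) - 3 * y * (2 * y)) / (3 + y ^ 2) ^ 2) y :=
        (Real.hasDerivAt_arctan y).sub hd2
      rw [hd.deriv, sub_pos, div_lt_div_iff₀ (by positivity) (by positivity)]
      nlinarith [sq_nonneg y, pow_pos (Set.mem_Ioi.mp hy) 4]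
  have := h (Set.self_mem_Ici) (Set.mem_Ici.mpr ht.le) ht
  simpa [Real.arctan_zero] using this

theorem phi₂_between_bounds (x : ℝ) (hx : 0 < x) :
    3 / (1 + 3 * x) < Real.arctan (1 / Real.sqrt x) / Real.sqrt x ∧
      Real.arctan (1 / Real.sqrt x) / Real.sqrt x < 1 / x := by
  have hs : 0 < Real.sqrt x := Real.sqrt_pos.mpr hx
  have hs2 : Real.sqrt x ^ 2 = x := Real.sq_sqrt hx.le
  set t := 1 / Real.sqrt x with htdef
  have ht : 0 < t := by positivity
  have ht2 : t ^ 2 = 1 / x := by rw [htdef, div_pow, one_pow, hs2]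
  have hrw : Real.arctan t / Real.sqrt x = Real.arctan t * t := by
    rw [htdef]; ring
  constructor
  · rw [hrw]
    have h := arctan_gt_aux ht
    have key : 3 / (1 + 3 * x) = 3 * t / (3 + t ^ 2) * t := by
      have h3 : 3 * t / (3 + t ^ 2) * t = 3 * t ^ 2 / (3 + t ^ 2) := by ring
      rw [h3, ht2]
      rw [div_eq_div_iff (by positivity) (by positivity)]
      field_simp
      ring
    rw [key]
    exact (mul_lt_mul_iff_of_pos_right ht).mpr h
  · rw [hrw]
    have h := arctan_lt_self_aux ht
    calc Real.arctan t * t < t * t := (mul_lt_mul_iff_of_pos_right ht).mpr h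
      _ = 1 / x := by rw [← sq, ht2]
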